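/- Let a_1, a_2 ∈ ℂ and let r_1, r_2 > 0 be such that ball(a_1, r_1) ∩ ball(a_2, r_2) ≠ ∅. Then there exists a unique pair (a, r) ∈ ℂ × (0, ∞) such that r < r_1 + r_2, ball(a_1, r_1) ∪ ball(a_2, r_2) ⊆ ball(a, r), and r is minimal among all radii r' for which some open disk ball(a', r') contains ball(a_1, r_1) ∪ ball(a_2, r_2). -/
import Mathlib

open Metric

private lemma aux_ball_sub (a b : ℂ) (r s : ℝ) (hr : 0 < r)
    (h : ball a r ⊆ ball b s) : dist a b + r ≤ s := by
  have hab : dist a b < s := h (mem_ball_self hr)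
  refine le_of_forall_lt fun c hc => ?_
  rcases le_or_gt c (dist a b) with h1 | h1
  · exact h1.trans_lt hab
  · set ε := dist a b + r - c with hε
    have hε0 : 0 < ε := by simp only [hε]; linarith
    have hεr : ε < r := by simp only [hε]; linarith
    set u : ℂ := if a = b then 1 else ‖a - b‖⁻¹ • (a - b) with hu
    have hnu : ‖u‖ = 1 := by
      rw [hu]; split_ifs with hh
      · simp
      · rw [norm_smul, norm_inv, norm_norm, inv_mul_cancel₀]
        simpa [sub_eq_zero] using hh
    have hx : a + (r - ε) • u ∈ ball a r := by
      rw [mem_ball, dist_eq_norm]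
      simp only [add_sub_cancel_left, norm_smul, hnu, mul_one, Real.norm_eq_abs,
        abs_of_pos (by linarith : (0:ℝ) < r - ε)]
      linarith
    have hx2 := h hx
    rw [mem_ball, dist_eq_norm] at hx2
    have hkey : ‖a + (r - ε) • u - b‖ = dist a b + (r - ε) := by
      by_cases hh : a = b
      · subst hh
        rw [add_sub_cancel_left, norm_smul, hnu, mul_one, Real.norm_eq_abs,
          abs_of_pos (by linarith : (0:ℝ) < r - ε), dist_self, zero_add]
      · have hd0 : ‖a - b‖ ≠ 0 := by simpa [sub_eq_zero] using hh
        have hdpos : 0 < ‖a - b‖ := lt_of_le_of_ne (norm_nonneg _) (Ne.symm hd0)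
        have hcoef : 0 < 1 + (r - ε) * ‖a - b‖⁻¹ := by
          have : 0 ≤ (r - ε) * ‖a - b‖⁻¹ :=
            mul_nonneg (by linarith) (inv_nonneg.2 (norm_nonneg _))
          linarith
        have heq : a + (r - ε) • u - b = (1 + (r - ε) * ‖a - b‖⁻¹) • (a - b) := by
          rw [hu, if_neg hh, smul_smul]
          module
        rw [heq, norm_smul, Real.norm_eq_abs, abs_of_pos hcoef, dist_eq_norm]
        rw [add_mul, one_mul, mul_assoc, inv_mul_cancel₀ hd0, mul_one]
    rw [hkey] at hx2
    linarith

/-- if two open disks of positive radii meet, then there is a unique pair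
`(a, r)` with `r > 0`, `r < r₁ + r₂`, `ball(a₁, r₁) ∪ ball(a₂, r₂) ⊆ ball(a, r)`, and `r`
minimal among all radii of open disks containing the union. -/
theorem stmt_13 (a₁ a₂ : ℂ) (r₁ r₂ : ℝ) (hr₁ : 0 < r₁) (hr₂ : 0 < r₂)
    (hmeet : (ball a₁ r₁ ∩ ball a₂ r₂).Nonempty) :
    ∃! p : ℂ × ℝ, 0 < p.2 ∧ p.2 < r₁ + r₂ ∧
      ball a₁ r₁ ∪ ball a₂ r₂ ⊆ ball p.1 p.2 ∧
      ∀ (a' : ℂ) (r' : ℝ), ball a₁ r₁ ∪ ball a₂ r₂ ⊆ ball a' r' → p.2 ≤ r' := by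
  obtain ⟨x, hx1, hx2⟩ := hmeet
  rw [mem_ball] at hx1 hx2
  set d := dist a₁ a₂ with hd_def
  have hd : d < r₁ + r₂ := by
    have h3 : d ≤ dist a₁ x + dist x a₂ := dist_triangle _ _ _
    rw [dist_comm a₁ x] at h3
    linarith
  have hdnn : (0:ℝ) ≤ d := dist_nonneg
  rcases le_or_gt (d + r₂) r₁ with hc1 | hc1
  · -- ball a₂ r₂ ⊆ ball a₁ r₁; answer (a₁, r₁)
    have hcont : ball a₁ r₁ ∪ ball a₂ r₂ ⊆ ball a₁ r₁ :=
      Set.union_subset Set.Subset.rfl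
        (ball_subset_ball' (by rw [dist_comm]; linarith))
    refine ⟨(a₁, r₁), ⟨hr₁, by linarith, hcont, ?_⟩, ?_⟩
    · intro a' r' hs'
      have := aux_ball_sub a₁ a' r₁ r' hr₁ (Set.Subset.trans Set.subset_union_left hs')
      have hnn : (0:ℝ) ≤ dist a₁ a' := dist_nonneg
      linarith
    · rintro ⟨b, s⟩ ⟨hs0, hss, hsub, hmin⟩
      have hb1 : dist a₁ b + r₁ ≤ s :=
        aux_ball_sub a₁ b r₁ s hr₁ (Set.Subset.trans Set.subset_union_left hsub)
      have hsr : s ≤ r₁ := hmin a₁ r₁ hcont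
      have hnn : (0:ℝ) ≤ dist a₁ b := dist_nonneg
      have hb : a₁ = b := dist_le_zero.mp (by linarith)
      exact Prod.ext hb.symm (by simp; linarith)
  · rcases le_or_gt (d + r₁) r₂ with hc2 | hc2
    · -- ball a₁ r₁ ⊆ ball a₂ r₂; answer (a₂, r₂)
      have hcont : ball a₁ r₁ ∪ ball a₂ r₂ ⊆ ball a₂ r₂ :=
        Set.union_subset (ball_subset_ball' (by linarith)) Set.Subset.rfl
      refine ⟨(a₂, r₂), ⟨hr₂, by linarith, hcont, ?_⟩, ?_⟩
      · intro a' r' hs'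
        have := aux_ball_sub a₂ a' r₂ r' hr₂ (Set.Subset.trans Set.subset_union_right hs')
        have hnn : (0:ℝ) ≤ dist a₂ a' := dist_nonneg
        linarith
      · rintro ⟨b, s⟩ ⟨hs0, hss, hsub, hmin⟩
        have hb2 : dist a₂ b + r₂ ≤ s :=
          aux_ball_sub a₂ b r₂ s hr₂ (Set.Subset.trans Set.subset_union_right hsub)
        have hsr : s ≤ r₂ := hmin a₂ r₂ hcont
        have hnn : (0:ℝ) ≤ dist a₂ b := dist_nonneg
        have hb : a₂ = b := dist_le_zero.mp (by linarith)
        exact Prod.ext hb.symm (by simp; linarith)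
    · -- general position
      have hd0 : 0 < d := by
        rcases eq_or_lt_of_le hdnn with h | h
        · exfalso; rw [← h] at hc1 hc2; linarith
        · exact h
      set r : ℝ := (d + r₁ + r₂) / 2 with hr_def
      have h2r : 2 * r = d + r₁ + r₂ := by rw [hr_def]; ring
      set t : ℝ := (r - r₁) / d with ht_def
      have ht0 : 0 < t := by
        apply div_pos _ hd0; linarith
      have htd : t * d = r - r₁ := div_mul_cancel₀ _ (ne_of_gt hd0)
      have ht1 : t < 1 := by
        rw [ht_def, div_lt_one hd0]; linarith
      set ctr : ℂ := AffineMap.lineMap a₁ a₂ t with hctr_def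
      have hda1 : dist a₁ ctr = r - r₁ := by
        rw [hctr_def, dist_left_lineMap, Real.norm_eq_abs, abs_of_pos ht0, ← hd_def, htd]
      have hda2 : dist a₂ ctr = r - r₂ := by
        have he : ctr = AffineMap.lineMap a₂ a₁ (1 - t) := by
          rw [AffineMap.lineMap_apply_one_sub]
        rw [he, dist_left_lineMap, Real.norm_eq_abs, abs_of_pos (by linarith), dist_comm a₂ a₁,
          ← hd_def]
        have : (1 - t) * d = d - (r - r₁) := by rw [sub_mul, one_mul, htd]
        rw [this]; linarith
      have hcont : ball a₁ r₁ ∪ ball a₂ r₂ ⊆ ball ctr r :=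
        Set.union_subset
          (ball_subset_ball' (by rw [dist_comm] at hda1 ⊢; rw [hda1]; linarith))
          (ball_subset_ball' (by rw [dist_comm] at hda2 ⊢; rw [hda2]; linarith))
      have hmin0 : ∀ (a' : ℂ) (r' : ℝ), ball a₁ r₁ ∪ ball a₂ r₂ ⊆ ball a' r' → r ≤ r' := by
        intro a' r' hs'
        have h1 := aux_ball_sub a₁ a' r₁ r' hr₁ (Set.Subset.trans Set.subset_union_left hs')
        have h2 := aux_ball_sub a₂ a' r₂ r' hr₂ (Set.Subset.trans Set.subset_union_right hs')
        have htr : d ≤ dist a₁ a' + dist a₂ a' := by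
          rw [dist_comm a₂ a']; exact dist_triangle a₁ a' a₂
        linarith
      refine ⟨(ctr, r), ⟨by rw [hr_def]; positivity, by linarith, hcont, hmin0⟩, ?_⟩
      rintro ⟨b, s⟩ ⟨hs0, hss, hsub, hmin⟩
      have hb1 : dist a₁ b + r₁ ≤ s :=
        aux_ball_sub a₁ b r₁ s hr₁ (Set.Subset.trans Set.subset_union_left hsub)
      have hb2 : dist a₂ b + r₂ ≤ s :=
        aux_ball_sub a₂ b r₂ s hr₂ (Set.Subset.trans Set.subset_union_right hsub)
      have hsr : s ≤ r := hmin ctr r hcont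
      have htr : d ≤ dist a₁ b + dist a₂ b := by
        rw [dist_comm a₂ b]; exact dist_triangle a₁ b a₂
      have hrs : r ≤ s := by linarith
      have hsreq : s = r := le_antisymm hsr hrs
      have he1 : dist a₁ b = r - r₁ := by linarith
      have he2 : dist a₂ b = r - r₂ := by linarith
      have hwb : Wbtw ℝ a₁ b a₂ := by
        rw [← dist_add_dist_eq_iff]
        rw [dist_comm b a₂, ← hd_def]
        linarith
      obtain ⟨θ, ⟨hθ0, hθ1⟩, hbeq⟩ := hwb
      have hθd : dist a₁ b = θ * d := by
        rw [← hbeq, dist_left_lineMap, Real.norm_eq_abs, abs_of_nonneg hθ0, hd_def]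
      have hθt : θ = t := by
        have : θ * d = t * d := by rw [← hθd, htd, he1]
        exact mul_right_cancel₀ (ne_of_gt hd0) this
      have hb : b = ctr := by rw [← hbeq, hθt, hctr_def]
      exact Prod.ext hb (by simpa using hsreq)
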